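/- The group E_13(ℚ) of rational points of the elliptic curve y² = x³ − 169x is infinite; equivalently, E_13(ℚ) contains a point of infinite order. -/

import Mathlib

/-- The elliptic curve `E_13 : y² = x³ − 169x` as an affine Weierstrass curve over `ℚ`. -/
def E13 : WeierstrassCurve.Affine ℚ :=
  { a₁ := 0, a₂ := 0, a₃ := 0, a₄ := -169, a₆ := 0 }

namespace E13aux

open WeierstrassCurve.Affine

lemma a1 : E13.a₁ = 0 := rfl
lemma a2 : E13.a₂ = 0 := rfl
lemma a3 : E13.a₃ = 0 := rfl
lemma a4 : E13.a₄ = -169 := rfl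
lemma a6 : E13.a₆ = 0 := rfl

lemma equation_iff13 (x y : ℚ) : E13.Equation x y ↔ y ^ 2 = x ^ 3 - 169 * x := by
  rw [WeierstrassCurve.Affine.equation_iff, a1, a2, a3, a4, a6]
  constructor <;> intro h <;> linarith

lemma negY_eq (x y : ℚ) : E13.negY x y = -y := by
  simp [WeierstrassCurve.Affine.negY, a1, a3]

lemma nonsingular_of (x y : ℚ) (heq : y ^ 2 = x ^ 3 - 169 * x) (hy : y ≠ 0) :
    E13.Nonsingular x y := by
  rw [WeierstrassCurve.Affine.nonsingular_iff]
  refine ⟨(equation_iff13 x y).mpr heq, Or.inr ?_⟩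
  rw [a1, a3]
  intro h
  apply hy
  linarith

lemma v2_odd_nat (n : ℕ) (h : ¬ (2 ∣ n)) : padicValRat 2 (n : ℚ) = 0 := by
  rw [padicValRat.of_nat, padicValNat.eq_zero_of_not_dvd h]
  norm_num

lemma v2_169 : padicValRat 2 (169 : ℚ) = 0 := by
  have := v2_odd_nat 169 (by norm_num)
  norm_num at this ⊢
  exact this

/-- Key doubling lemma: if `v₂(x) ≤ -2` then doubling decreases `v₂(x)` by exactly 2. -/
lemma key {x y : ℚ} (h : E13.Nonsingular x y) (hx0 : x ≠ 0)
    (hv : padicValRat 2 x ≤ -2) :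
    ∃ (x' y' : ℚ) (h' : E13.Nonsingular x' y'),
      (Point.some _ _ h + Point.some _ _ h : E13.Point) = Point.some _ _ h' ∧
      x' ≠ 0 ∧ padicValRat 2 x' = padicValRat 2 x - 2 := by
  have heq : y ^ 2 = x ^ 3 - 169 * x := (equation_iff13 x y).mp h.1
  -- y ≠ 0
  have hy0 : y ≠ 0 := by
    intro hy
    rw [hy] at heq
    have hx2 : x ^ 2 = 169 := by
      have : x * (x ^ 2 - 169) = 0 := by linarith
      rcases mul_eq_zero.mp this with h' | h'
      · exact absurd h' hx0
      · linarith
    have : (x - 13) * (x + 13) = 0 := by linarith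
    rcases mul_eq_zero.mp this with h' | h'
    · have hx13 : x = 13 := by linarith
      rw [hx13] at hv
      have : padicValRat 2 ((13 : ℕ) : ℚ) = 0 := v2_odd_nat 13 (by norm_num)
      norm_num at this
      omega
    · have hx13 : x = -13 := by linarith
      rw [hx13] at hv
      have h13 : padicValRat 2 ((13 : ℕ) : ℚ) = 0 := v2_odd_nat 13 (by norm_num)
      norm_num at h13
      rw [show (-13 : ℚ) = -(13 : ℚ) by norm_num, padicValRat.neg, h13] at hv
      omega
  have hy : y ≠ E13.negY x y := by
    rw [negY_eq]
    intro hc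
    apply hy0
    linarith [hc]
  -- the doubling
  refine ⟨E13.addX x x (E13.slope x x y y), _,
    WeierstrassCurve.Affine.nonsingular_add h h fun hc => hy hc.2,
    WeierstrassCurve.Affine.Point.add_self_of_Y_ne hy, ?_, ?_⟩
  all_goals {
    have hL : E13.slope x x y y = (3 * x ^ 2 - 169) / (2 * y) := by
      rw [WeierstrassCurve.Affine.slope_of_Y_ne rfl hy, negY_eq, a1, a2, a4]
      ring_nf
    have hxx : E13.addX x x (E13.slope x x y y) = (x ^ 2 + 169) ^ 2 / (4 * y ^ 2) := by
      rw [WeierstrassCurve.Affine.addX, hL, a1, a2]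
      field_simp
      linear_combination (-32 * x) * heq
    have hnum : x ^ 2 + 169 ≠ 0 := by positivity
    have hx'0 : (x ^ 2 + 169) ^ 2 / (4 * y ^ 2) ≠ 0 := by positivity
    -- valuations
    have hvx2 : padicValRat 2 (x ^ 2) = 2 * padicValRat 2 x := by
      rw [padicValRat.pow x]; push_cast; ring
    have hvnum : padicValRat 2 (x ^ 2 + 169) = 2 * padicValRat 2 x := by
      rw [padicValRat.add_eq_of_lt (p := 2) (by positivity) (pow_ne_zero 2 hx0)
        (by norm_num) (by rw [hvx2, v2_169]; linarith), hvx2]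
    have hvy2 : padicValRat 2 (y ^ 2) = 3 * padicValRat 2 x := by
      have h169x : (169 : ℚ) * x ≠ 0 := by
        intro hc; exact hx0 (by rcases mul_eq_zero.mp hc with h' | h' <;> [norm_num at h'; exact h'])
      have hv169x : padicValRat 2 (169 * x) = padicValRat 2 x := by
        rw [padicValRat.mul (by norm_num) hx0, v2_169]; ring
      have hvx3 : padicValRat 2 (x ^ 3) = 3 * padicValRat 2 x := by
        rw [padicValRat.pow x]; push_cast; ring
      have hsub : x ^ 3 - 169 * x = x ^ 3 + (-(169 * x)) := by ring
      rw [heq, hsub, padicValRat.add_eq_of_lt (p := 2)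
        (by rw [← hsub, ← heq]; positivity) (pow_ne_zero 3 hx0)
        (neg_ne_zero.mpr h169x)
        (by rw [padicValRat.neg, hv169x, hvx3]; linarith), hvx3]
    have hv4 : padicValRat 2 (4 : ℚ) = 2 := by
      have h2 : padicValRat 2 ((2 : ℕ) : ℚ) = 1 := padicValRat.self (by norm_num)
      norm_num at h2
      rw [show ((4 : ℚ)) = 2 ^ 2 by norm_num, padicValRat.pow (2 : ℚ), h2]
      norm_num
    have hvx' : padicValRat 2 ((x ^ 2 + 169) ^ 2 / (4 * y ^ 2)) = padicValRat 2 x - 2 := by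
      rw [padicValRat.div (p := 2) (pow_ne_zero 2 hnum) (by positivity),
        padicValRat.pow (x ^ 2 + 169),
        padicValRat.mul (p := 2) (by norm_num) (pow_ne_zero 2 hy0),
        hvnum, hvy2, hv4]
      push_cast
      ring
    first
      | (rw [hxx]; exact hx'0)
      | (rw [hxx]; exact hvx')
  }

/-- The starting point coordinates. -/
noncomputable def x₀ : ℚ := 11432100241 / 375584400
noncomputable def y₀ : ℚ := 1105240264347961 / 7278825672000

lemma heq₀ : y₀ ^ 2 = x₀ ^ 3 - 169 * x₀ := by
  rw [x₀, y₀]; norm_num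

lemma hy₀ : y₀ ≠ 0 := by rw [y₀]; norm_num

lemma hx₀ : x₀ ≠ 0 := by rw [x₀]; norm_num

lemma h₀ : E13.Nonsingular x₀ y₀ := nonsingular_of x₀ y₀ heq₀ hy₀

lemma v2_x₀ : padicValRat 2 x₀ = -4 := by
  have hnum : padicValRat 2 ((11432100241 : ℕ) : ℚ) = 0 := v2_odd_nat _ (by norm_num)
  have hden : padicValRat 2 ((375584400 : ℕ) : ℚ) = 4 := by
    rw [padicValRat.of_nat,
      show (375584400 : ℕ) = 2 ^ 4 * 23474025 by norm_num,
      padicValNat.mul (by norm_num) (by norm_num),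
      padicValNat.prime_pow, padicValNat.eq_zero_of_not_dvd (by norm_num)]
    norm_num
  rw [x₀, padicValRat.div (p := 2) (by norm_num) (by norm_num)]
  norm_num at hnum hden
  rw [hnum, hden]
  norm_num

/-- The point of infinite order. -/
noncomputable def P : E13.Point := Point.some _ _ h₀

lemma iter (k : ℕ) : ∃ (x y : ℚ) (h : E13.Nonsingular x y),
    ((2 ^ k • P : E13.Point) = Point.some _ _ h) ∧ x ≠ 0 ∧
      padicValRat 2 x = -4 - 2 * (k : ℤ) := by
  induction k with
  | zero =>
    refine ⟨x₀, y₀, h₀, by simp [P], hx₀, by norm_num [v2_x₀]⟩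
  | succ k ih =>
    obtain ⟨x, y, h, hP, hx0, hv⟩ := ih
    obtain ⟨x', y', h', hadd, hx'0, hv'⟩ := key h hx0 (by
      rw [hv]
      have : (0 : ℤ) ≤ 2 * (k : ℤ) := by positivity
      omega)
    refine ⟨x', y', h', ?_, hx'0, by rw [hv', hv]; push_cast; ring⟩
    rw [pow_succ, mul_comm, mul_smul, hP, two_smul, hadd]

lemma inj : Function.Injective (fun k : ℕ => (2 ^ k • P : E13.Point)) := by
  intro j k hjk
  obtain ⟨xj, yj, hj, hPj, hxj0, hvj⟩ := iter j
  obtain ⟨xk, yk, hk, hPk, hxk0, hvk⟩ := iter k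
  simp only at hjk
  rw [hPj, hPk] at hjk
  have hx : xj = xk := by injection hjk
  rw [hx, hvk] at hvj
  omega

lemma not_finite_order : ¬ IsOfFinAddOrder P := by
  intro hf
  have hfin : (AddSubgroup.zmultiples P : Set E13.Point).Finite := hf.finite_zmultiples
  have hsub : Set.range (fun k : ℕ => (2 ^ k • P : E13.Point)) ⊆
      (AddSubgroup.zmultiples P : Set E13.Point) := by
    rintro _ ⟨k, rfl⟩
    exact ⟨((2 ^ k : ℕ) : ℤ), by simp only []; rw [natCast_zsmul]⟩
  exact (Set.infinite_range_of_injective inj) (hfin.subset hsub)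

end E13aux

/-- The group `E_13(ℚ)` of rational points of `y² = x³ − 169x` is infinite; equivalently it
contains a point of infinite order. -/
theorem E13_points_infinite :
    Infinite E13.Point ∧ ∃ P : E13.Point, ¬ IsOfFinAddOrder P :=
  ⟨Infinite.of_injective _ E13aux.inj, E13aux.P, E13aux.not_finite_order⟩
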